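/- arXiv:2004.00744 — 2 statements merged into one kernel-verified Lean document; each statement's English description precedes it below -/
import Mathlib

section
/- Let G be a regular pattern graph on a pattern set 𝓡 and let p be a joint pmf satisfying marginal positivity whose selection odds model factorizes with respect to G, and fix θ : ((j : Fin d) → X_j) → ℝ. Then for every r ∈ 𝓡 with r ≠ 1_d and every ℓ: Σ_{Ξ ∈ Π_r} μ_{Ξ,r}(ℓ) = m(ℓ, r), i.e. the sum over all paths from 1_d to r of the path-specific regression functions evaluated at the endpoint r equals the conditional expectation E[θ(L) | L_r = ℓ_r, R = r]. -/
open Finset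

noncomputable section

/-- Response patterns: binary vectors of length `d`, ordered pointwise (`false < true`). -/
abbrev Pat (d : ℕ) := Fin d → Bool

/-- The all-true (fully observed) pattern `1_d`. -/
def allOnes (d : ℕ) : Pat d := fun _ => true

variable {d : ℕ}


instance (r s : Pat d) : Decidable (r ≤ s) :=
  decidable_of_iff (∀ j, r j ≤ s j) (by simp [Pi.le_def])

instance (r s : Pat d) : Decidable (r < s) :=
  decidable_of_iff (r ≤ s ∧ ¬ s ≤ r) lt_iff_le_not_ge.symm

/-- Two full-data values have the same observed part under pattern `r`. -/
def agree {X : Fin d → Type*} (r : Pat d) (ℓ ℓ' : ∀ j, X j) : Prop :=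
  ∀ j, r j = true → ℓ j = ℓ' j

instance {X : Fin d → Type*} [∀ j, DecidableEq (X j)] (r : Pat d) (ℓ ℓ' : ∀ j, X j) :
    Decidable (agree r ℓ ℓ') := by
  unfold agree; infer_instance

variable {X : Fin d → Type*} [∀ j, Fintype (X j)] [∀ j, DecidableEq (X j)]

/-- `p(ℓ, A) = Σ_{s ∈ A} p(ℓ, s)`. -/
def jointA (p : (∀ j, X j) → Pat d → ℝ) (ℓ : ∀ j, X j) (A : Finset (Pat d)) : ℝ :=
  ∑ s ∈ A, p ℓ s

/-- `p_r(ℓ, s) = Σ_{ℓ' ~_r ℓ} p(ℓ', s)` : observed-data mass under pattern `r`. -/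
def obsP (p : (∀ j, X j) → Pat d → ℝ) (r : Pat d) (ℓ : ∀ j, X j) (s : Pat d) : ℝ :=
  ∑ ℓ' ∈ univ.filter (fun ℓ' => agree r ℓ ℓ'), p ℓ' s

/-- `p_r(ℓ, A) = Σ_{s ∈ A} p_r(ℓ, s)`. -/
def obsPA (p : (∀ j, X j) → Pat d → ℝ) (r : Pat d) (ℓ : ∀ j, X j) (A : Finset (Pat d)) : ℝ :=
  ∑ s ∈ A, obsP p r ℓ s

/-- `p` is a joint pmf on (full data) × (pattern set `𝓡`): nonnegative with total sum 1. -/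
def IsJointPMF (𝓡 : Finset (Pat d)) (p : (∀ j, X j) → Pat d → ℝ) : Prop :=
  (∀ ℓ, ∀ r ∈ 𝓡, 0 ≤ p ℓ r) ∧ (∑ ℓ : ∀ j, X j, ∑ r ∈ 𝓡, p ℓ r) = 1

/-- Marginal positivity: `p_r(ℓ, r) > 0` for every `ℓ` and every `r ∈ 𝓡`. -/
def MargPos (𝓡 : Finset (Pat d)) (p : (∀ j, X j) → Pat d → ℝ) : Prop :=
  ∀ ℓ, ∀ r ∈ 𝓡, 0 < obsP p r ℓ r

/-- Full positivity: `p(ℓ, r) > 0` for every `ℓ` and every `r ∈ 𝓡`. -/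
def FullPos (𝓡 : Finset (Pat d)) (p : (∀ j, X j) → Pat d → ℝ) : Prop :=
  ∀ ℓ, ∀ r ∈ 𝓡, 0 < p ℓ r

/-- Selection odds `O_r(ℓ) = p_r(ℓ, r) / p_r(ℓ, PA(r))`. -/
def odds (p : (∀ j, X j) → Pat d → ℝ) (PA : Pat d → Finset (Pat d)) (r : Pat d)
    (ℓ : ∀ j, X j) : ℝ :=
  obsP p r ℓ r / obsPA p r ℓ (PA r)

/-- A regular pattern graph on `𝓡`: `1_d` is a source, and every other pattern in `𝓡`
has a nonempty parent set inside `𝓡` consisting of strictly larger patterns. -/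
def IsRegularGraph (𝓡 : Finset (Pat d)) (PA : Pat d → Finset (Pat d)) : Prop :=
  PA (allOnes d) = ∅ ∧
    ∀ r ∈ 𝓡, r ≠ allOnes d → (PA r).Nonempty ∧ PA r ⊆ 𝓡 ∧ ∀ s ∈ PA r, r < s

/-- The selection odds model of `p` factorizes with respect to the pattern graph. -/
def SelOddsFactorizes (𝓡 : Finset (Pat d)) (PA : Pat d → Finset (Pat d))
    (p : (∀ j, X j) → Pat d → ℝ) : Prop :=
  ∀ r ∈ 𝓡, r ≠ allOnes d → ∀ ℓ, p ℓ r = jointA p ℓ (PA r) * odds p PA r ℓ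

/-- The pattern mixture model of `p` factorizes with respect to the pattern graph. -/
def PMMFactorizes (𝓡 : Finset (Pat d)) (PA : Pat d → Finset (Pat d))
    (p : (∀ j, X j) → Pat d → ℝ) : Prop :=
  ∀ r ∈ 𝓡, r ≠ allOnes d → ∀ ℓ,
    p ℓ r * obsPA p r ℓ (PA r) = jointA p ℓ (PA r) * obsP p r ℓ r

/-- A path from `u` to `v` in the pattern graph: a nonempty sequence
`u = r_0, r_1, …, r_m = v` of patterns in `𝓡` with `r_i ∈ PA(r_{i+1})`. -/
def IsPath (𝓡 : Finset (Pat d)) (PA : Pat d → Finset (Pat d)) (u v : Pat d)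
    (Ξ : List (Pat d)) : Prop :=
  Ξ ≠ [] ∧ Ξ.head? = some u ∧ Ξ.getLast? = some v ∧ (∀ q ∈ Ξ, q ∈ 𝓡) ∧
    Ξ.Chain' (fun a b => a ∈ PA b)
section Aux

variable {X : Fin d → Type*} [∀ j, Fintype (X j)] [∀ j, DecidableEq (X j)]

lemma le_allOnes (r : Pat d) : r ≤ allOnes d := fun _ => Bool.le_true _

lemma falseCard_lt {s t : Pat d} (h : s < t) :
    (univ.filter fun j => t j = false).card < (univ.filter fun j => s j = false).card := by
  apply Finset.card_lt_card
  constructor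
  · intro j hj
    simp only [mem_filter, mem_univ, true_and] at hj ⊢
    have := h.1 j
    rw [hj] at this
    revert this; cases hsj : s j <;> simp
  · intro hsub
    have h2 := h.2
    rw [Pi.le_def] at h2
    push_neg at h2
    obtain ⟨j, hj⟩ := h2
    have hsj : s j = false := by revert hj; cases s j <;> cases t j <;> simp
    have htj : t j = true := by revert hj; cases s j <;> cases t j <;> simp
    have : j ∈ univ.filter fun j => t j = false := hsub (by simp [hsj])
    simp [htj] at this

lemma chain_last_le (𝓡 : Finset (Pat d)) (PA : Pat d → Finset (Pat d))
    (hG : IsRegularGraph 𝓡 PA) :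
    ∀ (Ξ : List (Pat d)), (∀ q ∈ Ξ, q ∈ 𝓡) → Ξ.Chain' (fun a b => a ∈ PA b) →
      ∀ v, Ξ.getLast? = some v → ∀ τ ∈ Ξ, v ≤ τ := by
  intro Ξ
  induction Ξ with
  | nil => simp
  | cons a l ih =>
    intro hmem hch v hlast τ hτ
    cases l with
    | nil =>
      simp only [List.getLast?_singleton, Option.some.injEq] at hlast
      simp only [List.mem_singleton] at hτ
      subst hlast; subst hτ; exact le_refl _
    | cons b l' =>
      rw [List.Chain', List.isChain_cons_cons] at hch
      have hb : b ∈ 𝓡 := hmem b (by simp)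
      have hbne : b ≠ allOnes d := by
        intro h; rw [h, hG.1] at hch; exact absurd hch.1 (Finset.notMem_empty a)
      have hba : b < a := (hG.2 b hb hbne).2.2 a hch.1
      have hlast' : (b :: l').getLast? = some v := by
        rwa [List.getLast?_cons_cons] at hlast
      have hIH := ih (fun q hq => hmem q (List.mem_cons_of_mem _ hq)) hch.2 v hlast'
      rcases List.mem_cons.1 hτ with h | h
      · subst h
        exact le_of_lt (lt_of_le_of_lt (hIH b (by simp)) hba)
      · exact hIH τ h

end Aux
section Aux2

lemma path_allOnes {𝓡 : Finset (Pat d)} {PA : Pat d → Finset (Pat d)}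
    (hG : IsRegularGraph 𝓡 PA) {Ξ : List (Pat d)}
    (h : IsPath 𝓡 PA (allOnes d) (allOnes d) Ξ) : Ξ = [allOnes d] := by
  obtain ⟨hne, hhead, hlast, hmem, hch⟩ := h
  have hall : ∀ τ ∈ Ξ, τ = allOnes d := fun τ hτ =>
    le_antisymm (le_allOnes τ) (chain_last_le 𝓡 PA hG Ξ hmem hch _ hlast τ hτ)
  match Ξ, hne with
  | [a], _ =>
    simp only [List.head?_cons, Option.some.injEq] at hhead
    rw [hhead]
  | a :: b :: l, _ =>
    exfalso
    rw [List.Chain', List.isChain_cons_cons] at hch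
    have ha : a = allOnes d := hall a (by simp)
    have hb : b = allOnes d := hall b (by simp)
    rw [ha, hb, hG.1] at hch
    exact absurd hch.1 (Finset.notMem_empty _)

lemma path_append {𝓡 : Finset (Pat d)} {PA : Pat d → Finset (Pat d)}
    {s t : Pat d} (hs : s ∈ 𝓡) (ht : t ∈ PA s) {Ξ' : List (Pat d)}
    (h : IsPath 𝓡 PA (allOnes d) t Ξ') : IsPath 𝓡 PA (allOnes d) s (Ξ' ++ [s]) := by
  obtain ⟨hne, hhead, hlast, hmem, hch⟩ := h
  refine ⟨by simp, ?_, ?_, ?_, ?_⟩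
  · rwa [List.head?_append_of_ne_nil _ hne]
  · simp [List.getLast?_concat]
  · intro q hq
    rcases List.mem_append.1 hq with h | h
    · exact hmem q h
    · simp only [List.mem_singleton] at h; subst h; exact hs
  · rw [List.Chain', List.isChain_append]
    refine ⟨hch, List.isChain_singleton _, ?_⟩
    intro x hx y hy
    simp only [List.head?_cons, Option.mem_def, Option.some.injEq] at hy
    rw [Option.mem_def, hlast, Option.some.injEq] at hx
    subst hx; subst hy; exact ht

lemma path_decomp {𝓡 : Finset (Pat d)} {PA : Pat d → Finset (Pat d)}
    {s : Pat d} {Ξ : List (Pat d)}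
    (h : IsPath 𝓡 PA (allOnes d) s Ξ) (hne : s ≠ allOnes d) :
    Ξ.dropLast ≠ [] ∧ Ξ.dropLast ++ [s] = Ξ ∧
      Ξ.dropLast.getLastD s ∈ PA s ∧
      IsPath 𝓡 PA (allOnes d) (Ξ.dropLast.getLastD s) Ξ.dropLast := by
  obtain ⟨hne0, hhead, hlast, hmem, hch⟩ := h
  have hconcat : Ξ.dropLast ++ [s] = Ξ :=
    List.dropLast_append_getLast? s (Option.mem_def.2 hlast)
  have hdne : Ξ.dropLast ≠ [] := by
    intro hd
    rw [hd, List.nil_append] at hconcat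
    rw [← hconcat] at hhead
    simp only [List.head?_cons, Option.some.injEq] at hhead
    exact hne hhead
  have hgl : Ξ.dropLast.getLast? = some (Ξ.dropLast.getLastD s) := by
    rw [List.getLastD_eq_getLast?]
    cases hx : Ξ.dropLast.getLast? with
    | none => exact absurd (List.getLast?_eq_none_iff.1 hx) hdne
    | some x => rfl
  have hch' : Ξ.dropLast.Chain' (fun a b => a ∈ PA b) ∧ Ξ.dropLast.getLastD s ∈ PA s := by
    rw [← hconcat, List.Chain', List.isChain_append] at hch
    exact ⟨hch.1, hch.2.2 _ (Option.mem_def.2 hgl) s (by simp)⟩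
  refine ⟨hdne, hconcat, hch'.2, hdne, ?_, hgl, ?_, hch'.1⟩
  · rw [← List.head?_append_of_ne_nil Ξ.dropLast (l₂ := [s]) hdne, hconcat]; exact hhead
  · intro q hq
    exact hmem q (by rw [← hconcat]; exact List.mem_append_left _ hq)

end Aux2
section Aux3

lemma sum_paths_decomp {𝓡 : Finset (Pat d)} {PA : Pat d → Finset (Pat d)}
    (Paths : Pat d → Finset (List (Pat d)))
    (hPaths : ∀ r, ∀ Ξ, Ξ ∈ Paths r ↔ IsPath 𝓡 PA (allOnes d) r Ξ)
    {s : Pat d} (hs : s ∈ 𝓡) (hne : s ≠ allOnes d) (f : List (Pat d) → ℝ) :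
    ∑ Ξ ∈ Paths s, f Ξ = ∑ t ∈ PA s, ∑ Ξ' ∈ Paths t, f (Ξ' ++ [s]) := by
  rw [Finset.sum_sigma']
  symm
  refine Finset.sum_nbij' (i := fun x => x.2 ++ [s])
    (j := fun Ξ => ⟨Ξ.dropLast.getLastD s, Ξ.dropLast⟩) ?_ ?_ ?_ ?_ ?_
  · rintro ⟨t, Ξ'⟩ hx
    rw [Finset.mem_sigma] at hx
    exact (hPaths s _).2 (path_append hs hx.1 ((hPaths t Ξ').1 hx.2))
  · intro Ξ hΞ
    obtain ⟨_, _, hPA, hpath⟩ := path_decomp ((hPaths s Ξ).1 hΞ) hne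
    rw [Finset.mem_sigma]
    exact ⟨hPA, (hPaths _ _).2 hpath⟩
  · rintro ⟨t, Ξ'⟩ hx
    rw [Finset.mem_sigma] at hx
    have hp := (hPaths t Ξ').1 hx.2
    have h1 : (Ξ' ++ [s]).dropLast = Ξ' := List.dropLast_concat ..
    have h2 : Ξ'.getLastD s = t := by
      rw [List.getLastD_eq_getLast?, hp.2.2.1]; rfl
    simp only [h1, h2]
  · intro Ξ hΞ
    obtain ⟨_, hconcat, _, _⟩ := path_decomp ((hPaths s Ξ).1 hΞ) hne
    exact hconcat
  · rintro ⟨t, Ξ'⟩ _; rfl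

end Aux3
section Aux4

variable {X : Fin d → Type*} [∀ j, Fintype (X j)] [∀ j, DecidableEq (X j)]

lemma paths_top_eq {𝓡 : Finset (Pat d)} (h𝓡 : allOnes d ∈ 𝓡)
    {PA : Pat d → Finset (Pat d)} (hG : IsRegularGraph 𝓡 PA)
    (Paths : Pat d → Finset (List (Pat d)))
    (hPaths : ∀ r, ∀ Ξ, Ξ ∈ Paths r ↔ IsPath 𝓡 PA (allOnes d) r Ξ) :
    Paths (allOnes d) = {[allOnes d]} := by
  ext Ξ
  rw [hPaths, Finset.mem_singleton]
  constructor
  · exact path_allOnes hG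
  · rintro rfl
    exact ⟨by simp, rfl, rfl, by simpa using h𝓡, List.isChain_singleton _⟩

lemma key_sum_paths {𝓡 : Finset (Pat d)} (h𝓡 : allOnes d ∈ 𝓡)
    {PA : Pat d → Finset (Pat d)} (hG : IsRegularGraph 𝓡 PA)
    {p : (∀ j, X j) → Pat d → ℝ} (hfact : SelOddsFactorizes 𝓡 PA p)
    (Paths : Pat d → Finset (List (Pat d)))
    (hPaths : ∀ r, ∀ Ξ, Ξ ∈ Paths r ↔ IsPath 𝓡 PA (allOnes d) r Ξ) :
    ∀ (n : ℕ) (s : Pat d), s ∈ 𝓡 → (univ.filter fun j => s j = false).card ≤ n →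
      ∀ ℓ', ∑ Ξ ∈ Paths s,
          p ℓ' (allOnes d) *
            (Ξ.map fun τ => if τ = allOnes d then 1 else odds p PA τ ℓ').prod
        = p ℓ' s := by
  intro n
  induction n with
  | zero =>
    intro s hs hcard ℓ'
    have hstop : s = allOnes d := by
      funext j
      by_contra hj
      have : j ∈ univ.filter fun j => s j = false := by
        simp only [mem_filter, mem_univ, true_and]
        revert hj; cases s j <;> simp [allOnes]
      rw [Finset.card_eq_zero.1 (Nat.le_zero.1 hcard)] at this
      exact absurd this (Finset.notMem_empty _)
    subst hstop
    rw [paths_top_eq h𝓡 hG Paths hPaths, Finset.sum_singleton]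
    simp
  | succ n ih =>
    intro s hs hcard ℓ'
    by_cases hne : s = allOnes d
    · subst hne
      rw [paths_top_eq h𝓡 hG Paths hPaths, Finset.sum_singleton]
      simp
    · rw [sum_paths_decomp Paths hPaths hs hne]
      have hstep : ∀ t ∈ PA s,
          (∑ Ξ' ∈ Paths t,
            p ℓ' (allOnes d) *
              ((Ξ' ++ [s]).map fun τ =>
                if τ = allOnes d then 1 else odds p PA τ ℓ').prod)
          = p ℓ' t * odds p PA s ℓ' := by
        intro t ht
        have htR : t ∈ 𝓡 := (hG.2 s hs hne).2.1 ht
        have htlt : s < t := (hG.2 s hs hne).2.2 t ht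
        have htcard : (univ.filter fun j => t j = false).card ≤ n :=
          Nat.lt_succ_iff.1 (lt_of_lt_of_le (falseCard_lt htlt) hcard)
        calc (∑ Ξ' ∈ Paths t,
              p ℓ' (allOnes d) *
                ((Ξ' ++ [s]).map fun τ =>
                  if τ = allOnes d then 1 else odds p PA τ ℓ').prod)
            = ∑ Ξ' ∈ Paths t,
              (p ℓ' (allOnes d) *
                (Ξ'.map fun τ =>
                  if τ = allOnes d then 1 else odds p PA τ ℓ').prod) * odds p PA s ℓ' := by
              refine Finset.sum_congr rfl fun Ξ' _ => ?_
              rw [List.map_append, List.prod_append]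
              simp [hne, mul_assoc]
          _ = p ℓ' t * odds p PA s ℓ' := by
              rw [← Finset.sum_mul, ih t htR htcard ℓ']
      rw [Finset.sum_congr rfl hstep, ← Finset.sum_mul]
      rw [hfact s hs hne ℓ']
      rfl

end Aux4
section Aux5

variable {X : Fin d → Type*} [∀ j, Fintype (X j)] [∀ j, DecidableEq (X j)]

lemma agree_filter_eq {r : Pat d} {ℓ ℓ' : ∀ j, X j} (h : agree r ℓ ℓ') :
    (univ.filter fun x => agree r ℓ' x) = (univ.filter fun x => agree r ℓ x) := by
  ext x
  simp only [mem_filter, mem_univ, true_and]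
  constructor
  · intro hx j hj; rw [h j hj, hx j hj]
  · intro hx j hj; rw [← h j hj, hx j hj]

lemma obsP_agree {p : (∀ j, X j) → Pat d → ℝ} {r : Pat d} {ℓ ℓ' : ∀ j, X j}
    (h : agree r ℓ ℓ') (s : Pat d) : obsP p r ℓ' s = obsP p r ℓ s := by
  unfold obsP; rw [agree_filter_eq h]

lemma obsPA_agree {p : (∀ j, X j) → Pat d → ℝ} {r : Pat d} {ℓ ℓ' : ∀ j, X j}
    (h : agree r ℓ ℓ') (A : Finset (Pat d)) : obsPA p r ℓ' A = obsPA p r ℓ A :=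
  Finset.sum_congr rfl fun s _ => obsP_agree h s

lemma obsP_pos_of_lt {𝓡 : Finset (Pat d)} {p : (∀ j, X j) → Pat d → ℝ}
    (hpmf : IsJointPMF 𝓡 p) (hpos : MargPos 𝓡 p) {r t : Pat d}
    (hrt : r < t) (ht : t ∈ 𝓡) (ℓ : ∀ j, X j) : 0 < obsP p r ℓ t := by
  refine lt_of_lt_of_le (hpos ℓ t ht) (Finset.sum_le_sum_of_subset_of_nonneg ?_ ?_)
  · intro x hx
    simp only [mem_filter, mem_univ, true_and] at hx ⊢
    intro j hj
    refine hx j ?_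
    have := hrt.1 j
    rw [hj] at this
    revert this; cases t j <;> simp
  · intro x _ _
    exact hpmf.1 x t ht

lemma obsPA_pos {𝓡 : Finset (Pat d)} {PA : Pat d → Finset (Pat d)}
    (hG : IsRegularGraph 𝓡 PA) {p : (∀ j, X j) → Pat d → ℝ}
    (hpmf : IsJointPMF 𝓡 p) (hpos : MargPos 𝓡 p) {r : Pat d}
    (hr : r ∈ 𝓡) (hne : r ≠ allOnes d) (ℓ : ∀ j, X j) :
    0 < obsPA p r ℓ (PA r) := by
  obtain ⟨hnonempty, hsub, hlt⟩ := hG.2 r hr hne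
  exact Finset.sum_pos
    (fun t ht => obsP_pos_of_lt hpmf hpos (hlt t ht) (hsub ht) ℓ) hnonempty

end Aux5
/-- **Proposition (relation to regression adjustment).** The sum over all paths
`Ξ ∈ Π_r` of the path-specific regression functions `μ_{Ξ,r}` equals the conditional
expectation `m(ℓ, r) = E[θ(L) | L_r = ℓ_r, R = r]`. -/
theorem sum_path_regression_eq_cond_exp [∀ j, Nonempty (X j)]
    (𝓡 : Finset (Pat d)) (h𝓡 : allOnes d ∈ 𝓡)
    (PA : Pat d → Finset (Pat d)) (hG : IsRegularGraph 𝓡 PA)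
    (p : (∀ j, X j) → Pat d → ℝ)
    (hpmf : IsJointPMF 𝓡 p) (hpos : MargPos 𝓡 p)
    (hfact : SelOddsFactorizes 𝓡 PA p)
    (θ : (∀ j, X j) → ℝ)
    (Paths : Pat d → Finset (List (Pat d)))
    (hPaths : ∀ r, ∀ Ξ, Ξ ∈ Paths r ↔ IsPath 𝓡 PA (allOnes d) r Ξ) :
    ∀ r ∈ 𝓡, r ≠ allOnes d → ∀ ℓ,
      (∑ Ξ ∈ Paths r,
        (∑ ℓ' ∈ univ.filter (fun ℓ' => agree r ℓ ℓ'),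
            θ ℓ' * p ℓ' (allOnes d) *
              (Ξ.map fun τ => if r < τ ∧ τ ≠ allOnes d then odds p PA τ ℓ' else 1).prod)
          / obsPA p r ℓ (PA r))
      = (∑ ℓ' ∈ univ.filter (fun ℓ' => agree r ℓ ℓ'), θ ℓ' * p ℓ' r) / obsP p r ℓ r := by
  intro r hr hne ℓ
  have hD : 0 < obsPA p r ℓ (PA r) := obsPA_pos hG hpmf hpos hr hne ℓ
  have hN : 0 < obsP p r ℓ r := hpos ℓ r hr
  -- inner path sum identity
  have hinner : ∀ ℓ' : ∀ j, X j,
      (∑ Ξ ∈ Paths r,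
        θ ℓ' * p ℓ' (allOnes d) *
          (Ξ.map fun τ => if r < τ ∧ τ ≠ allOnes d then odds p PA τ ℓ' else 1).prod)
      = θ ℓ' * jointA p ℓ' (PA r) := by
    intro ℓ'
    rw [sum_paths_decomp Paths hPaths hr hne]
    have hstep : ∀ t ∈ PA r,
        (∑ Ξ' ∈ Paths t,
          θ ℓ' * p ℓ' (allOnes d) *
            ((Ξ' ++ [r]).map fun τ =>
              if r < τ ∧ τ ≠ allOnes d then odds p PA τ ℓ' else 1).prod)
        = θ ℓ' * p ℓ' t := by
      intro t ht
      have htR : t ∈ 𝓡 := (hG.2 r hr hne).2.1 ht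
      have htlt : r < t := (hG.2 r hr hne).2.2 t ht
      have hterm : ∀ Ξ' ∈ Paths t,
          θ ℓ' * p ℓ' (allOnes d) *
            ((Ξ' ++ [r]).map fun τ =>
              if r < τ ∧ τ ≠ allOnes d then odds p PA τ ℓ' else 1).prod
          = θ ℓ' * (p ℓ' (allOnes d) *
              (Ξ'.map fun τ => if τ = allOnes d then 1 else odds p PA τ ℓ').prod) := by
        intro Ξ' hΞ'
        have hp := (hPaths t Ξ').1 hΞ'
        have hge : ∀ τ ∈ Ξ', t ≤ τ :=
          chain_last_le 𝓡 PA hG Ξ' hp.2.2.2.1 hp.2.2.2.2 t hp.2.2.1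
        have hmapeq : (Ξ'.map fun τ =>
              if r < τ ∧ τ ≠ allOnes d then odds p PA τ ℓ' else 1)
            = Ξ'.map fun τ => if τ = allOnes d then 1 else odds p PA τ ℓ' := by
          refine List.map_congr_left fun τ hτ => ?_
          have hrτ : r < τ := lt_of_lt_of_le htlt (hge τ hτ)
          by_cases hτ1 : τ = allOnes d <;> simp [hτ1, hrτ]
        rw [List.map_append, List.prod_append, hmapeq]
        simp [lt_irrefl, mul_assoc]
      rw [Finset.sum_congr rfl hterm, ← Finset.mul_sum,
        key_sum_paths h𝓡 hG hfact Paths hPaths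
          ((univ.filter fun j => t j = false).card) t htR le_rfl ℓ']
    rw [Finset.sum_congr rfl hstep, ← Finset.mul_sum]
    rfl
  -- rewrite RHS integrand using factorization and agreement
  have hR : ∀ ℓ' ∈ univ.filter (fun ℓ' => agree r ℓ ℓ'),
      θ ℓ' * p ℓ' r
      = θ ℓ' * jointA p ℓ' (PA r) * (obsP p r ℓ r / obsPA p r ℓ (PA r)) := by
    intro ℓ' hℓ'
    simp only [mem_filter, mem_univ, true_and] at hℓ'
    rw [hfact r hr hne ℓ']
    unfold odds
    rw [obsP_agree hℓ' r, obsPA_agree hℓ' (PA r), mul_assoc]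
  rw [← Finset.sum_div, Finset.sum_comm, Finset.sum_congr rfl (fun ℓ' _ => hinner ℓ'),
    Finset.sum_congr rfl hR, ← Finset.sum_mul]
  symm
  rw [mul_div_assoc', div_div, mul_comm (obsPA p r ℓ (PA r)) (obsP p r ℓ r),
    mul_comm _ (obsP p r ℓ r), mul_div_mul_left _ _ hN.ne']
end
end

section
/- Let G be an acyclic pattern graph on a pattern set 𝓡 and let p be a joint pmf with full positivity (p(ℓ, r) > 0 for every ℓ and every r ∈ 𝓡) whose pattern mixture model factorizes with respect to G. Suppose r, s ∈ 𝓡 with s ∉ PA(r) satisfy: (blocking) every path from 1_d to r in G contains s; and (uninformative) every pattern q ∉ {s, r} lying on some path from s to r in G satisfies q < r in the pointwise order. Then p(ℓ, r) · p_r(ℓ, s) = p(ℓ, s) · p_r(ℓ, r) for every ℓ (the extrapolation distribution of pattern r given its observed part equals the conditional distribution computed from pattern s), and consequently the pattern mixture model of p also factorizes with respect to the graph G' obtained from G by replacing PA(r) with the single parent set {s} and leaving all other parent sets unchanged. -/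
open Finset

noncomputable section

variable {d : ℕ}


variable {X : Fin d → Type*} [∀ j, Fintype (X j)] [∀ j, DecidableEq (X j)]

/-- An acyclic pattern graph on `𝓡`: `1_d` is the unique source (it has no parents, every
other pattern has a nonempty parent set inside `𝓡`), and the arrow relation `s ∈ PA(r)`
admits no directed cycle. -/
def IsAcyclicGraph (𝓡 : Finset (Pat d)) (PA : Pat d → Finset (Pat d)) : Prop :=
  PA (allOnes d) = ∅ ∧
    (∀ r ∈ 𝓡, r ≠ allOnes d → (PA r).Nonempty ∧ PA r ⊆ 𝓡) ∧
    ∀ v : Pat d, ¬ Relation.TransGen (fun s t => t ∈ 𝓡 ∧ s ∈ PA t) v v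


section AuxEG

variable {𝓡 : Finset (Pat d)} {PA : Pat d → Finset (Pat d)}

/-- Convenient inductive presentation of paths in the pattern graph. -/
inductive GPath (𝓡 : Finset (Pat d)) (PA : Pat d → Finset (Pat d)) :
    Pat d → Pat d → List (Pat d) → Prop
  | single (u : Pat d) (hu : u ∈ 𝓡) : GPath 𝓡 PA u u [u]
  | cons (u w v : Pat d) (ζ : List (Pat d)) (hu : u ∈ 𝓡) (huw : u ∈ PA w)
      (h : GPath 𝓡 PA w v ζ) : GPath 𝓡 PA u v (u :: ζ)

lemma GPath.left_mem {u v : Pat d} {ζ : List (Pat d)} (h : GPath 𝓡 PA u v ζ) : u ∈ 𝓡 := by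
  cases h <;> assumption

lemma GPath.right_mem {u v : Pat d} {ζ : List (Pat d)} (h : GPath 𝓡 PA u v ζ) : v ∈ 𝓡 := by
  induction h with
  | single u hu => exact hu
  | cons u w v ζ hu huw h ih => exact ih

lemma GPath.mem_right {u v : Pat d} {ζ : List (Pat d)} (h : GPath 𝓡 PA u v ζ) : v ∈ ζ := by
  induction h with
  | single u hu => simp
  | cons u w v ζ hu huw h ih => exact List.mem_cons_of_mem _ ih

lemma GPath.isPath {u v : Pat d} {ζ : List (Pat d)} (h : GPath 𝓡 PA u v ζ) :
    IsPath 𝓡 PA u v ζ := by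
  induction h with
  | single u hu => exact ⟨by simp, rfl, rfl, by simpa using hu, List.isChain_singleton _⟩
  | cons u w v ζ hu huw h ih =>
    obtain ⟨hne, hhd, hlast, hmem, hch⟩ := ih
    cases ζ with
    | nil => exact absurd rfl hne
    | cons b l =>
      have hb : b = w := by simpa using hhd
      subst hb
      refine ⟨by simp, rfl, ?_, ?_, ?_⟩
      · rw [List.getLast?_cons_cons]; exact hlast
      · intro q hq
        rcases List.mem_cons.mp hq with h1 | h1
        · exact h1 ▸ hu
        · exact hmem q h1
      · exact List.isChain_cons_cons.mpr ⟨huw, hch⟩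

lemma GPath.snoc {u v w : Pat d} {ζ : List (Pat d)} (h : GPath 𝓡 PA u v ζ)
    (hw : w ∈ 𝓡) (hvw : v ∈ PA w) : GPath 𝓡 PA u w (ζ ++ [w]) := by
  induction h with
  | single u hu => exact .cons u w w [w] hu hvw (.single w hw)
  | cons u w' v ζ hu huw' h ih => exact .cons u w' w _ hu huw' (ih hvw)

lemma GPath.cons_tail {u v : Pat d} {ζ : List (Pat d)} (h : GPath 𝓡 PA u v ζ) :
    GPath 𝓡 PA u v (u :: ζ.tail) := by
  cases h with
  | single u hu => exact .single u hu
  | cons u w v ζ hu huw hp => exact .cons u w v ζ hu huw hp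

lemma GPath.glue {u t v : Pat d} {ζ1 ζ2 : List (Pat d)} (h1 : GPath 𝓡 PA u t ζ1)
    (h2 : GPath 𝓡 PA t v ζ2) : GPath 𝓡 PA u v (ζ1 ++ ζ2.tail) := by
  induction h1 with
  | single a ha => exact h2.cons_tail
  | cons a w b ζ ha haw hp ih => exact .cons a w v _ ha haw (ih h2)

lemma GPath.split {u v x : Pat d} {ζ : List (Pat d)} (h : GPath 𝓡 PA u v ζ) (hx : x ∈ ζ) :
    (∃ ζa, GPath 𝓡 PA u x ζa) ∧ (∃ ζb, GPath 𝓡 PA x v ζb) := by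
  induction h with
  | single u hu =>
    have hxu : x = u := by simpa using hx
    subst hxu
    exact ⟨⟨[x], .single x hu⟩, ⟨[x], .single x hu⟩⟩
  | cons u w v ζ hu huw h ih =>
    rcases List.mem_cons.mp hx with h1 | h1
    · subst h1
      exact ⟨⟨[x], .single x hu⟩, ⟨x :: ζ, .cons x w v ζ hu huw h⟩⟩
    · obtain ⟨⟨ζa, ha⟩, hb⟩ := ih h1
      exact ⟨⟨u :: ζa, .cons u w x ζa hu huw ha⟩, hb⟩

lemma GPath.transGen {u v : Pat d} {ζ : List (Pat d)} (h : GPath 𝓡 PA u v ζ) (huv : u ≠ v) :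
    Relation.TransGen (fun a b => b ∈ 𝓡 ∧ a ∈ PA b) u v := by
  induction h with
  | single u hu => exact absurd rfl huv
  | cons u w v ζ hu huw h ih =>
    have hw𝓡 : w ∈ 𝓡 := h.left_mem
    by_cases hwv : w = v
    · subst hwv; exact .single ⟨hw𝓡, huw⟩
    · exact .head ⟨hw𝓡, huw⟩ (ih hwv)

lemma acyclic_wf
    (h : ∀ v : Pat d, ¬ Relation.TransGen (fun a b => b ∈ 𝓡 ∧ a ∈ PA b) v v) :
    WellFounded (fun a b : Pat d => b ∈ 𝓡 ∧ a ∈ PA b) := by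
  have hwf : WellFounded (Relation.TransGen (fun a b : Pat d => b ∈ 𝓡 ∧ a ∈ PA b)) := by
    letI : IsIrrefl (Pat d) (Relation.TransGen (fun a b : Pat d => b ∈ 𝓡 ∧ a ∈ PA b)) := ⟨h⟩
    letI : IsTrans (Pat d) (Relation.TransGen (fun a b : Pat d => b ∈ 𝓡 ∧ a ∈ PA b)) :=
      ⟨fun _ _ _ => Relation.TransGen.trans⟩
    exact Finite.wellFounded_of_trans_of_irrefl _
  refine Subrelation.wf ?_ hwf
  intro a b hab
  exact Relation.TransGen.single hab

lemma exists_gpath_from_top (h𝓡 : allOnes d ∈ 𝓡) (hG : IsAcyclicGraph 𝓡 PA) :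
    ∀ u ∈ 𝓡, ∃ ζ, GPath 𝓡 PA (allOnes d) u ζ := by
  obtain ⟨h1, h2, h3⟩ := hG
  have hwf := acyclic_wf h3
  intro u
  refine WellFounded.induction hwf
    (C := fun u => u ∈ 𝓡 → ∃ ζ, GPath 𝓡 PA (allOnes d) u ζ) u ?_
  intro u ih hu
  by_cases hO : u = allOnes d
  · subst hO; exact ⟨[allOnes d], .single _ hu⟩
  · obtain ⟨⟨q, hq⟩, hsub⟩ := h2 u hu hO
    obtain ⟨ζ, hζ⟩ := ih q ⟨hu, hq⟩ (hsub hq)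
    exact ⟨ζ ++ [u], hζ.snoc hu hq⟩

lemma agree_refl (r : Pat d) {X : Fin d → Type*} (m : ∀ j, X j) : agree r m m :=
  fun _ _ => rfl

lemma agree_symm {X : Fin d → Type*} {r : Pat d} {m m' : ∀ j, X j} (h : agree r m m') :
    agree r m' m := fun j hj => (h j hj).symm

lemma agree_trans {X : Fin d → Type*} {r : Pat d} {a b c : ∀ j, X j}
    (h1 : agree r a b) (h2 : agree r b c) : agree r a c :=
  fun j hj => (h1 j hj).trans (h2 j hj)

lemma agree_mono {X : Fin d → Type*} {t r : Pat d} (htr : t ≤ r) {m m' : ∀ j, X j}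
    (h : agree r m m') : agree t m m' := by
  intro j hj
  apply h j
  have h2 := htr j
  rw [hj] at h2
  exact Bool.eq_true_of_true_le h2

variable {X : Fin d → Type*} [∀ j, Fintype (X j)] [∀ j, DecidableEq (X j)]

lemma filter_agree_eq {r : Pat d} {m m' : ∀ j, X j} (h : agree r m m') :
    univ.filter (fun ℓ' => agree r m' ℓ') = univ.filter (fun ℓ' => agree r m ℓ') := by
  ext ℓ'
  simp only [mem_filter, mem_univ, true_and]
  exact ⟨fun h2 => agree_trans h h2, fun h2 => agree_trans (agree_symm h) h2⟩

lemma obsP_congr (p : (∀ j, X j) → Pat d → ℝ) {r : Pat d} {m m' : ∀ j, X j}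
    (h : agree r m m') (u : Pat d) : obsP p r m' u = obsP p r m u := by
  unfold obsP; rw [filter_agree_eq h]

lemma obsPA_congr (p : (∀ j, X j) → Pat d → ℝ) {r : Pat d} {m m' : ∀ j, X j}
    (h : agree r m m') (A : Finset (Pat d)) : obsPA p r m' A = obsPA p r m A := by
  unfold obsPA
  exact Finset.sum_congr rfl fun q _ => obsP_congr p h q

lemma obsP_pos {p : (∀ j, X j) → Pat d → ℝ} (hpos : FullPos 𝓡 p) {q : Pat d}
    (hq : q ∈ 𝓡) (t : Pat d) (m : ∀ j, X j) : 0 < obsP p t m q := by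
  refine Finset.sum_pos (fun ℓ' _ => hpos ℓ' q hq) ⟨m, ?_⟩
  simp only [mem_filter, mem_univ, true_and]
  exact agree_refl t m

lemma obsPA_pos_s10 {p : (∀ j, X j) → Pat d → ℝ} (hpos : FullPos 𝓡 p) {A : Finset (Pat d)}
    (hA : A.Nonempty) (hA𝓡 : A ⊆ 𝓡) (t : Pat d) (m : ∀ j, X j) : 0 < obsPA p t m A :=
  Finset.sum_pos (fun q hq => obsP_pos hpos (hA𝓡 hq) t m) hA

lemma invariant_step {p : (∀ j, X j) → Pat d → ℝ} (hpos : FullPos 𝓡 p)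
    (hfact : PMMFactorizes 𝓡 PA p) {r s t : Pat d} (hs : s ∈ 𝓡) (ht : t ∈ 𝓡)
    (htO : t ≠ allOnes d) (htr : t ≤ r) (hPAne : (PA t).Nonempty) (hPAsub : PA t ⊆ 𝓡)
    (hIH : ∀ q ∈ PA t, ∀ m, p m q * obsP p r m s = p m s * obsP p r m q) :
    ∀ m, p m t * obsP p r m s = p m s * obsP p r m t := by
  intro m
  set A := PA t with hA
  have star : ∀ m', p m' t * (obsPA p t m' A * obsP p r m' s)
      = p m' s * (obsPA p r m' A * obsP p t m' t) := by
    intro m'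
    have h1 := hfact t ht htO m'
    have h2 : jointA p m' A * obsP p r m' s = p m' s * obsPA p r m' A := by
      unfold jointA obsPA
      rw [Finset.sum_mul, Finset.mul_sum]
      exact Finset.sum_congr rfl fun q hq => hIH q hq m'
    calc p m' t * (obsPA p t m' A * obsP p r m' s)
        = (p m' t * obsPA p t m' A) * obsP p r m' s := by ring
      _ = (jointA p m' A * obsP p t m' t) * obsP p r m' s := by rw [h1]
      _ = (jointA p m' A * obsP p r m' s) * obsP p t m' t := by ring
      _ = (p m' s * obsPA p r m' A) * obsP p t m' t := by rw [h2]
      _ = p m' s * (obsPA p r m' A * obsP p t m' t) := by ring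
  have key : obsP p r m t * (obsPA p t m A * obsP p r m s)
      = obsP p r m s * (obsPA p r m A * obsP p t m t) := by
    have e1 : obsP p r m t * (obsPA p t m A * obsP p r m s)
        = ∑ m' ∈ univ.filter (fun ℓ' => agree r m ℓ'),
            p m' t * (obsPA p t m A * obsP p r m s) := by
      rw [obsP, Finset.sum_mul]
    rw [e1]
    have e2 : ∀ m' ∈ univ.filter (fun ℓ' => agree r m ℓ'),
        p m' t * (obsPA p t m A * obsP p r m s)
          = p m' s * (obsPA p r m A * obsP p t m t) := by
      intro m' hm'
      have hag : agree r m m' := by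
        simpa only [mem_filter, mem_univ, true_and] using hm'
      have hagt : agree t m m' := agree_mono htr hag
      rw [← obsPA_congr p hagt A, ← obsP_congr p hag s, star m',
          obsPA_congr p hag A, obsP_congr p hagt t]
    rw [Finset.sum_congr rfl e2, ← Finset.sum_mul]
    rfl
  have hS : 0 < obsP p r m s := obsP_pos hpos hs r m
  have hDt : 0 < obsPA p t m A := obsPA_pos_s10 hpos hPAne hPAsub t m
  have key2 : obsP p r m t * obsPA p t m A = obsPA p r m A * obsP p t m t :=
    mul_right_cancel₀ (ne_of_gt hS) (by linear_combination key)
  refine mul_right_cancel₀ (ne_of_gt hDt) ?_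
  linear_combination star m - p m s * key2

end AuxEG

/-- **Theorem (equivalent graphs).** If `s` blocks every path from `1_d` to `r` and every
pattern strictly inside a path from `s` to `r` is uninformative for `r` (i.e. `q < r`),
then the extrapolation distribution of `r` equals that computed from `s` alone, and the
pattern mixture model also factorizes w.r.t. the graph in which `PA(r)` is replaced
by `{s}`. -/
theorem equivalent_graph_rewiring [∀ j, Nonempty (X j)]
    (𝓡 : Finset (Pat d)) (h𝓡 : allOnes d ∈ 𝓡)
    (PA : Pat d → Finset (Pat d)) (hG : IsAcyclicGraph 𝓡 PA)
    (p : (∀ j, X j) → Pat d → ℝ)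
    (hpmf : IsJointPMF 𝓡 p) (hpos : FullPos 𝓡 p)
    (hfact : PMMFactorizes 𝓡 PA p)
    (r s : Pat d) (hr : r ∈ 𝓡) (hs : s ∈ 𝓡) (hsr : s ∉ PA r)
    (hblock : ∀ Ξ, IsPath 𝓡 PA (allOnes d) r Ξ → s ∈ Ξ)
    (huninf : ∀ q, q ≠ s → q ≠ r → (∃ ζ, IsPath 𝓡 PA s r ζ ∧ q ∈ ζ) → q < r) :
    (∀ ℓ, p ℓ r * obsP p r ℓ s = p ℓ s * obsP p r ℓ r) ∧
    PMMFactorizes 𝓡 (fun t => if t = r then {s} else PA t) p := by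
  classical
  obtain ⟨hPA1, hPA2, hacyc⟩ := hG
  by_cases hrO : r = allOnes d
  · -- r is the top pattern; blocking forces s = r
    have hsr' : s = r := by
      have hpath : IsPath 𝓡 PA (allOnes d) r [allOnes d] := by
        rw [hrO]; exact (GPath.single (𝓡 := 𝓡) (PA := PA) _ h𝓡).isPath
      have hmem := hblock _ hpath
      have hs1 : s = allOnes d := by simpa using hmem
      exact hs1.trans hrO.symm
    subst hsr'
    refine ⟨fun ℓ => rfl, ?_⟩
    intro t ht htO ℓ
    have htr2 : t ≠ s := by rw [hrO]; exact htO
    simp only [if_neg htr2]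
    exact hfact t ht htO ℓ
  by_cases hsr2 : s = r
  · subst hsr2
    refine ⟨fun ℓ => rfl, ?_⟩
    intro t ht htO ℓ
    by_cases htr2 : t = s
    · subst htr2
      simp [obsPA, jointA]
    · simp only [if_neg htr2]
      exact hfact t ht htO ℓ
  · -- main case : r ≠ allOnes, s ≠ r
    have hwf := acyclic_wf (𝓡 := 𝓡) (PA := PA) hacyc
    have hfromTop := exists_gpath_from_top h𝓡 ⟨hPA1, hPA2, hacyc⟩
    have main : ∀ t : Pat d, (∃ ζ1, GPath 𝓡 PA s t ζ1) → (∃ ζ2, GPath 𝓡 PA t r ζ2) →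
        ∀ m, p m t * obsP p r m s = p m s * obsP p r m t := by
      intro t
      refine WellFounded.induction hwf (C := fun t => (∃ ζ1, GPath 𝓡 PA s t ζ1) →
        (∃ ζ2, GPath 𝓡 PA t r ζ2) →
        ∀ m, p m t * obsP p r m s = p m s * obsP p r m t) t ?_
      rintro t ih ⟨ζ1, hζ1⟩ ⟨ζ2, hζ2⟩
      by_cases hts : t = s
      · subst hts; exact fun m => rfl
      have hst : s ≠ t := fun h => hts h.symm
      have ht𝓡 : t ∈ 𝓡 := hζ2.left_mem
      have htO : t ≠ allOnes d := by
        intro hO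
        obtain ⟨q, hq⟩ : ∃ q, (t ∈ 𝓡 ∧ q ∈ PA t) := by
          cases hζ1.transGen hst with
          | single h => exact ⟨s, h⟩
          | tail _ h => exact ⟨_, h⟩
        rw [hO, hPA1] at hq
        exact absurd hq.2 (Finset.notMem_empty _)
      have htr : t ≤ r := by
        by_cases htr2 : t = r
        · exact le_of_eq htr2
        · refine le_of_lt (huninf t hts htr2 ?_)
          exact ⟨ζ1 ++ ζ2.tail, (hζ1.glue hζ2).isPath,
            List.mem_append_left _ hζ1.mem_right⟩
      obtain ⟨hPAne, hPAsub⟩ := hPA2 t ht𝓡 htO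
      refine invariant_step hpos hfact hs ht𝓡 htO htr hPAne hPAsub ?_
      intro q hq
      have hq𝓡 : q ∈ 𝓡 := hPAsub hq
      have hqr : GPath 𝓡 PA q r (q :: ζ2) := .cons q t r ζ2 hq𝓡 hq hζ2
      have hsq : ∃ ζ, GPath 𝓡 PA s q ζ := by
        by_cases hqs : q = s
        · subst hqs; exact ⟨[q], .single q hq𝓡⟩
        obtain ⟨ζ0, hζ0⟩ := hfromTop q hq𝓡
        have htop : GPath 𝓡 PA (allOnes d) r (ζ0 ++ (q :: ζ2).tail) := hζ0.glue hqr
        have hsmem := hblock _ htop.isPath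
        rcases List.mem_append.mp hsmem with hmem | hmem
        · exact (hζ0.split hmem).2
        · obtain ⟨⟨ζa, hζa⟩, -⟩ := hζ2.split hmem
          exact ((hacyc s) ((hζ1.transGen hst).trans (hζa.transGen hts))).elim
      exact ih q ⟨ht𝓡, hq⟩ hsq ⟨q :: ζ2, hqr⟩
    have hζsr : ∃ ζ, GPath 𝓡 PA s r ζ := by
      obtain ⟨ζr, hζr⟩ := hfromTop r hr
      exact (hζr.split (hblock _ hζr.isPath)).2
    have first := main r hζsr ⟨[r], .single r hr⟩
    refine ⟨first, ?_⟩
    intro t ht htO ℓ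
    by_cases htr2 : t = r
    · subst htr2
      simp [obsPA, jointA]
      exact first ℓ
    · simp only [if_neg htr2]
      exact hfact t ht htO ℓ
end
end
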